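/- There exists a constant C₂ > 0 such that for all sufficiently small m > 0, ∑_{ℓ=1}^∞ (1/(2ℓ)) · (1/(πℓ)) · (1 - (1 - m²/(1+m²))^{2ℓ}) ≤ C₂ m² |log m|. -/

import Mathlib

/-- There is `C₂ > 0` such that for all sufficiently small `m > 0`,
`∑_{ℓ=1}^∞ (1/(2ℓ)) (1/(πℓ)) (1 - (1 - m²/(1+m²))^{2ℓ}) ≤ C₂ m² |log m|`. -/
theorem partition_ratio_bound :
    ∃ C₂ > (0 : ℝ), ∃ m₀ > (0 : ℝ), ∀ m : ℝ, 0 < m → m < m₀ →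
      Summable (fun ℓ : ℕ =>
        (1 / (2 * ((ℓ : ℝ) + 1))) * (1 / (Real.pi * (ℓ + 1))) *
          (1 - (1 - m ^ 2 / (1 + m ^ 2)) ^ (2 * (ℓ + 1)))) ∧
      (∑' ℓ : ℕ, (1 / (2 * ((ℓ : ℝ) + 1))) * (1 / (Real.pi * (ℓ + 1))) *
          (1 - (1 - m ^ 2 / (1 + m ^ 2)) ^ (2 * (ℓ + 1))))
        ≤ C₂ * m ^ 2 * |Real.log m| := by
  refine ⟨2, by norm_num, 1/2, by norm_num, fun m hm hm' => ?_⟩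
  have hπ : (0:ℝ) < Real.pi := Real.pi_pos
  set ξ : ℝ := m ^ 2 / (1 + m ^ 2) with hξdef
  have h1m : (0:ℝ) < 1 + m ^ 2 := by positivity
  have hξ0 : 0 < ξ := by positivity
  have hξm : ξ ≤ m ^ 2 := by
    rw [hξdef, div_le_iff₀ h1m]; nlinarith [sq_nonneg m]
  have hξ1 : ξ ≤ 1 := by
    rw [hξdef, div_le_one h1m]; nlinarith
  set f : ℕ → ℝ := fun ℓ =>
    (1 / (2 * ((ℓ : ℝ) + 1))) * (1 / (Real.pi * (ℓ + 1))) *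
      (1 - (1 - ξ) ^ (2 * (ℓ + 1))) with hf
  have hpow_nonneg : ∀ k : ℕ, (0:ℝ) ≤ (1 - ξ) ^ k := fun k =>
    pow_nonneg (by linarith) k
  have hpow_le_one : ∀ k : ℕ, (1 - ξ) ^ k ≤ 1 := fun k =>
    pow_le_one₀ (by linarith) (by linarith)
  have hf_nonneg : ∀ n, 0 ≤ f n := by
    intro n
    have h1 : (0:ℝ) ≤ 1 - (1 - ξ) ^ (2 * (n + 1)) := by
      have := hpow_le_one (2 * (n + 1)); linarith
    have hn : (0:ℝ) < (n:ℝ) + 1 := by positivity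
    have : 0 ≤ (1 / (2 * ((n : ℝ) + 1))) * (1 / (Real.pi * (n + 1))) := by positivity
    exact mul_nonneg this h1
  -- basic bound: f n ≤ 1/(2π (n+1)^2)
  have hf_le : ∀ n, f n ≤ 1 / (2 * Real.pi * ((n:ℝ) + 1) ^ 2) := by
    intro n
    have hn : (0:ℝ) < (n:ℝ) + 1 := by positivity
    have h1 : 1 - (1 - ξ) ^ (2 * (n + 1)) ≤ 1 := by
      have := hpow_nonneg (2 * (n + 1)); linarith
    calc f n ≤ (1 / (2 * ((n:ℝ) + 1))) * (1 / (Real.pi * ((n:ℝ) + 1))) * 1 :=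
          mul_le_mul_of_nonneg_left h1 (by positivity)
      _ = 1 / (2 * Real.pi * ((n:ℝ) + 1) ^ 2) := by field_simp
  -- Bernoulli bound: f n ≤ m^2 / (π (n+1))
  have hf_le2 : ∀ n, f n ≤ m ^ 2 / (Real.pi * ((n:ℝ) + 1)) := by
    intro n
    have hn : (0:ℝ) < (n:ℝ) + 1 := by positivity
    have hber : 1 + (2 * (n + 1) : ℕ) * (-ξ) ≤ (1 + (-ξ)) ^ (2 * (n + 1)) :=
      one_add_mul_le_pow (by linarith) _
    have h1 : 1 - (1 - ξ) ^ (2 * (n + 1)) ≤ 2 * ((n:ℝ) + 1) * ξ := by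
      have : ((2 * (n + 1) : ℕ) : ℝ) = 2 * ((n:ℝ) + 1) := by push_cast; ring
      rw [this] at hber
      have h2 : (1 + -ξ) = (1 - ξ) := by ring
      rw [h2] at hber; linarith
    calc f n ≤ (1 / (2 * ((n:ℝ) + 1))) * (1 / (Real.pi * ((n:ℝ) + 1))) *
          (2 * ((n:ℝ) + 1) * ξ) :=
          mul_le_mul_of_nonneg_left h1 (by positivity)
      _ = ξ / (Real.pi * ((n:ℝ) + 1)) := by field_simp
      _ ≤ m ^ 2 / (Real.pi * ((n:ℝ) + 1)) := by gcongr
  -- summability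
  have hsum2 : Summable (fun n : ℕ => 1 / (2 * Real.pi * ((n:ℝ) + 1) ^ 2)) := by
    have h0 : Summable (fun n : ℕ => 1 / ((n:ℝ) ^ 2)) :=
      Real.summable_one_div_nat_pow.mpr one_lt_two
    have h1 : Summable (fun n : ℕ => 1 / (((n:ℝ) + 1) ^ 2)) := by
      have := (summable_nat_add_iff (f := fun n : ℕ => 1 / ((n:ℝ) ^ 2)) 1).mpr h0
      refine this.congr fun n => ?_
      push_cast; ring
    have := h1.mul_left (1 / (2 * Real.pi))
    refine this.congr fun n => ?_
    field_simp
  have hsumf : Summable f := Summable.of_nonneg_of_le hf_nonneg hf_le hsum2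
  refine ⟨hsumf, ?_⟩
  -- choose the split point
  set N : ℕ := ⌈1 / m ^ 2⌉₊ with hN
  have hm1 : m ^ 2 ≤ 1 := by nlinarith
  have hm2pos : (0:ℝ) < m ^ 2 := by positivity
  have hinv1 : (1:ℝ) ≤ 1 / m ^ 2 := by
    rw [le_div_iff₀ hm2pos]; linarith
  have hNge : (1:ℝ) / m ^ 2 ≤ N := Nat.le_ceil _
  have hN1 : 1 ≤ N := by
    have : (1:ℝ) ≤ (N:ℝ) := le_trans hinv1 hNge
    exact_mod_cast this
  have hNpos : (0:ℝ) < N := by exact_mod_cast hN1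
  have hNle : (N:ℝ) ≤ 2 / m ^ 2 := by
    have := Nat.ceil_lt_add_one (le_of_lt (by positivity : (0:ℝ) < 1 / m ^ 2))
    have h2 : (2:ℝ) / m ^ 2 = 1 / m ^ 2 + 1 / m ^ 2 := by ring
    linarith [this]
  -- split the sum
  have hsplit : (∑' n, f n) = ∑ n ∈ Finset.range N, f n + ∑' n, f (n + N) :=
    (Summable.sum_add_tsum_nat_add N hsumf).symm
  -- head bound via harmonic numbers
  have hhead : ∑ n ∈ Finset.range N, f n ≤ m ^ 2 / Real.pi * (1 + Real.log N) := by
    calc ∑ n ∈ Finset.range N, f n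
        ≤ ∑ n ∈ Finset.range N, m ^ 2 / (Real.pi * ((n:ℝ) + 1)) :=
          Finset.sum_le_sum fun n _ => hf_le2 n
      _ = m ^ 2 / Real.pi * ∑ n ∈ Finset.range N, ((n:ℝ) + 1)⁻¹ := by
          rw [Finset.mul_sum]; congr 1; ext n; field_simp
      _ = m ^ 2 / Real.pi * (harmonic N : ℝ) := by
          congr 1
          rw [harmonic]
          push_cast
          rfl
      _ ≤ m ^ 2 / Real.pi * (1 + Real.log N) := by
          have := harmonic_le_one_add_log N
          gcongr
  -- tail bound via telescoping
  have htail : ∑' n, f (n + N) ≤ 1 / (2 * Real.pi) * (1 / N) := by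
    apply Real.tsum_le_of_sum_range_le (fun n => hf_nonneg _)
    intro K
    have key : ∀ n : ℕ, f (n + N) ≤
        1 / (2 * Real.pi) * (1 / ((n:ℝ) + N) - 1 / ((n:ℝ) + N + 1)) := by
      intro n
      have hnN : (0:ℝ) < (n:ℝ) + N := by positivity
      have h1 : f (n + N) ≤ 1 / (2 * Real.pi * (((n + N : ℕ):ℝ) + 1) ^ 2) := hf_le _
      have hcast : (((n + N : ℕ):ℝ)) = (n:ℝ) + N := by push_cast; ring
      rw [hcast] at h1
      refine h1.trans ?_
      rw [one_div, show (1 / (2 * Real.pi) * (1 / ((n:ℝ) + N) - 1 / ((n:ℝ) + N + 1)))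
        = (2 * Real.pi * (((n:ℝ) + N) * ((n:ℝ) + N + 1)))⁻¹ by field_simp; ring]
      apply inv_anti₀ (by positivity)
      nlinarith
    calc ∑ n ∈ Finset.range K, f (n + N)
        ≤ ∑ n ∈ Finset.range K, 1 / (2 * Real.pi) *
            (1 / ((n:ℝ) + N) - 1 / ((n:ℝ) + N + 1)) :=
          Finset.sum_le_sum fun n _ => key n
      _ = 1 / (2 * Real.pi) *
            ((fun i : ℕ => 1 / ((i:ℝ) + N)) 0 - (fun i : ℕ => 1 / ((i:ℝ) + N)) K) := by
          rw [← Finset.mul_sum, ← Finset.sum_range_sub' (fun i : ℕ => 1 / ((i:ℝ) + N)) K]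
          congr 1
          refine Finset.sum_congr rfl fun n _ => ?_
          push_cast; ring
      _ ≤ 1 / (2 * Real.pi) * (1 / N) := by
          apply mul_le_mul_of_nonneg_left _ (by positivity)
          have h2 : (0:ℝ) ≤ 1 / ((K:ℝ) + N) := by positivity
          simp only [Nat.cast_zero, zero_add]
          linarith
  -- log estimates
  have hlogm : Real.log m < -Real.log 2 := by
    have := Real.log_lt_log hm hm'
    rw [show (1:ℝ)/2 = 2⁻¹ by norm_num, Real.log_inv] at this
    linarith
  have hlog2 : (0:ℝ) < Real.log 2 := Real.log_pos (by norm_num)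
  have habs : |Real.log m| = -Real.log m := abs_of_neg (by linarith)
  have hlogm2 : Real.log 2 ≤ |Real.log m| := by rw [habs]; linarith
  have hlogN : Real.log N ≤ Real.log 2 + 2 * |Real.log m| := by
    calc Real.log N ≤ Real.log (2 / m ^ 2) := Real.log_le_log hNpos hNle
      _ = Real.log 2 - 2 * Real.log m := by
          rw [Real.log_div (by norm_num) (by positivity), Real.log_pow]
          push_cast; ring
      _ = Real.log 2 + 2 * |Real.log m| := by rw [habs]; ring
  have hone : (1:ℝ) ≤ 2 * |Real.log m| := by
    have : (1:ℝ)/2 ≤ Real.log 2 := by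
      have := Real.log_two_gt_d9; linarith
    linarith [hlogm2]
  have hinvN : 1 / (N:ℝ) ≤ m ^ 2 := by
    rw [div_le_iff₀ hNpos]
    calc (1:ℝ) = (1 / m ^ 2) * m ^ 2 := by field_simp
      _ ≤ (N:ℝ) * m ^ 2 := by gcongr
      _ = m ^ 2 * N := by ring
  -- put it together
  rw [hsplit]
  have hπ3 : Real.pi > 3 := by
    have := Real.pi_gt_d6; linarith
  have hbound1 : m ^ 2 / Real.pi * (1 + Real.log N) ≤
      m ^ 2 / Real.pi * (5 * |Real.log m|) := by
    have : 1 + Real.log N ≤ 5 * |Real.log m| := by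
      have h1 : Real.log N ≤ Real.log 2 + 2 * |Real.log m| := hlogN
      have h2 : Real.log 2 ≤ |Real.log m| := hlogm2
      linarith [hone]
    gcongr
  have hbound2 : 1 / (2 * Real.pi) * (1 / (N:ℝ)) ≤
      1 / (2 * Real.pi) * (m ^ 2 * (2 * |Real.log m|)) := by
    have : 1 / (N:ℝ) ≤ m ^ 2 * (2 * |Real.log m|) := by
      calc 1 / (N:ℝ) ≤ m ^ 2 := hinvN
        _ = m ^ 2 * 1 := by ring
        _ ≤ m ^ 2 * (2 * |Real.log m|) := by gcongr
    gcongr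
  have habs0 : (0:ℝ) ≤ |Real.log m| := abs_nonneg _
  calc ∑ n ∈ Finset.range N, f n + ∑' n, f (n + N)
      ≤ m ^ 2 / Real.pi * (5 * |Real.log m|) +
        1 / (2 * Real.pi) * (m ^ 2 * (2 * |Real.log m|)) :=
        add_le_add (hhead.trans hbound1) (htail.trans hbound2)
    _ = (6 / Real.pi) * (m ^ 2 * |Real.log m|) := by field_simp; ring
    _ ≤ 2 * m ^ 2 * |Real.log m| := by
        have h6 : 6 / Real.pi ≤ 2 := by
          rw [div_le_iff₀ hπ]; linarith
        calc (6 / Real.pi) * (m ^ 2 * |Real.log m|) ≤ 2 * (m ^ 2 * |Real.log m|) := by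
              gcongr
          _ = 2 * m ^ 2 * |Real.log m| := by ring
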